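/- arXiv:1803.10183 — 2 statements merged into one kernel-verified Lean document; each statement's English description precedes it below -/
import Mathlib

section
/- Barrier estimates for the power function. Let γ ≥ 1 and define φ(x) = |x|^{−γ} for x ∈ ℝⁿ∖{0}. (i) For every σ > 0, setting d = γσ^{−γ−2}, the paraboloid P(x) = σ^{−γ} + (d/2)σ² − (d/2)|x|² satisfies φ(x) ≥ P(x) for all x ≠ 0, with equality when |x| = σ. (ii) There exists c̄ ∈ (0,1) depending only on n and γ such that for every x₀ ≠ 0, writing σ = |x₀|, ξ = x₀/σ, d = γσ^{−γ−2}, and Q(x) = σ^{−γ} + (d/4)σ² − d|x − x₀/2|², one has φ(x) − Q(x) ≥ ((γ+1)d/2)·((x−x₀)·ξ)² for all x ∈ B_{c̄σ}(x₀) (in particular Q touches φ from below at x₀). -/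
open Metric

noncomputable section

abbrev En (n : ℕ) := EuclideanSpace ℝ (Fin n)


-- Bernoulli upper: (1+y)^(-(q+1)) ≤ (1+(q+1)y)⁻¹
lemma bern_le {q y : ℝ} (hq : 1 ≤ q + 1) (hy : -1 < y) (hz : 0 < 1 + (q+1)*y) :
    (1+y) ^ (-(q+1)) ≤ (1 + (q+1)*y)⁻¹ := by
  have h1 : 0 < 1 + y := by linarith
  have hb : 1 + (q+1)*y ≤ (1+y) ^ (q+1) := one_add_mul_self_le_rpow_one_add hy.le hq
  rw [Real.rpow_neg h1.le]
  exact inv_anti₀ hz hb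

-- Bernoulli lower for y ≤ 0: 1 - (q+1)y ≤ (1+y)^(-(q+1))
lemma bern_ge {q y : ℝ} (hq : 1 ≤ q + 1) (hy : -1 < y) (hy0 : y ≤ 0) :
    1 - (q+1)*y ≤ (1+y) ^ (-(q+1)) := by
  have h1 : 0 < 1 + y := by linarith
  have hv : 0 ≤ -y := by linarith
  have h1v : 0 < 1 + -y := by linarith
  have hz : 0 < 1 + (q+1)*(-y) := by nlinarith
  have step1 : (1+y) ≤ (1 + -y)⁻¹ := by
    rw [inv_eq_one_div, le_div_iff₀ h1v]; nlinarith
  have step2 : (1+y)^(q+1) ≤ ((1 + -y)^(q+1))⁻¹ := by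
    rw [← Real.inv_rpow h1v.le]
    exact Real.rpow_le_rpow h1.le step1 (by linarith)
  have hb : 1 + (q+1)*(-y) ≤ (1 + -y) ^ (q+1) := one_add_mul_self_le_rpow_one_add (by linarith) hq
  have step3 : ((1 + -y)^(q+1))⁻¹ ≤ (1 + (q+1)*(-y))⁻¹ := inv_anti₀ hz hb
  have : (1+y)^(q+1) ≤ (1 + (q+1)*(-y))⁻¹ := step2.trans step3
  rw [Real.rpow_neg h1.le]
  have hp : (0:ℝ) < (1+y)^(q+1) := Real.rpow_pos_of_pos h1 _
  rw [show (1:ℝ) - (q+1)*y = 1 + (q+1)*(-y) by ring]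
  exact (le_inv_comm₀ hp hz).mp this

-- Second-order Taylor-type lower bound for (1+w)^(-q)
lemma lemA {q w : ℝ} (hq : 1/2 ≤ q) (hw : |w| ≤ 1/(2*(q+1)^2)) :
    1 - q*w + q*(2*q+1)/4 * w^2 ≤ (1+w) ^ (-q) := by
  set δ : ℝ := 1/(2*(q+1)^2) with hδdef
  set C : ℝ := q*(2*q+1)/4 with hCdef
  have hq1 : (3:ℝ)/2 ≤ q + 1 := by linarith
  have hδpos : 0 < δ := by positivity
  have hδle : δ ≤ 2/9 := by
    rw [hδdef]; rw [div_le_div_iff₀ (by positivity) (by norm_num)]; nlinarith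
  have hwl : -δ ≤ w := neg_le_of_abs_le hw
  have hwu : w ≤ δ := le_of_abs_le hw
  -- basic positivity on the interval
  have hpos : ∀ y : ℝ, -δ ≤ y → 0 < 1 + y := by intro y hy; nlinarith
  have hδq : (q+1)*δ ≤ 1/3 := by
    rw [hδdef, mul_one_div, div_le_div_iff₀ (by positivity) (by norm_num)]
    nlinarith
  have hzpos : ∀ y : ℝ, -δ ≤ y → y ≤ δ → 0 < 1 + (q+1)*y := by
    intro y h1 h2
    nlinarith [mul_le_mul_of_nonneg_left h1 (by linarith : (0:ℝ) ≤ q+1),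
      mul_le_mul_of_nonneg_left h2 (by linarith : (0:ℝ) ≤ q+1)]
  set g : ℝ → ℝ := fun y => (1+y) ^ (-q) - (1 - q*y + C*y^2) with hgdef
  have hderiv : ∀ y : ℝ, -δ ≤ y → HasDerivAt g (-q*(1+y)^(-q-1) + q - 2*C*y) y := by
    intro y hy
    have h1 : 0 < 1 + y := hpos y hy
    have hr : HasDerivAt (fun z : ℝ => (1+z) ^ (-q)) ((-q)*(1+y)^(-q-1)*1) y := by
      have hbase : HasDerivAt (fun z : ℝ => 1 + z) 1 y := (hasDerivAt_id y).const_add 1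
      exact (Real.hasDerivAt_rpow_const (p := -q) (Or.inl h1.ne')).comp y hbase
    have hp : HasDerivAt (fun z : ℝ => 1 - q*z + C*z^2) (0 - q*1 + C*(2*y)) y := by
      apply HasDerivAt.add
      · exact (hasDerivAt_const y 1).sub ((hasDerivAt_id y).const_mul q)
      · simpa using ((hasDerivAt_pow 2 y).const_mul C)
    have := hr.sub hp
    exact this.congr_deriv (by ring)
  have hg0 : g 0 = 0 := by simp [hgdef]
  -- g is nonneg at w
  have key : 0 ≤ g w := by
    rcases le_or_gt 0 w with h0w | h0w
    · -- monotone on [0, δ]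
      have mono : MonotoneOn g (Set.Icc 0 δ) := by
        apply monotoneOn_of_deriv_nonneg (convex_Icc 0 δ)
        · intro y hy
          exact ((hderiv y (by linarith [hy.1])).differentiableAt.continuousAt).continuousWithinAt
        · intro y hy
          rw [interior_Icc] at hy
          exact ((hderiv y (by linarith [hy.1])).differentiableAt).differentiableWithinAt
        · intro y hy
          rw [interior_Icc] at hy
          rw [(hderiv y (by linarith [hy.1])).deriv]
          have h1 : 0 < 1 + y := hpos y (by linarith [hy.1])
          have hz : 0 < 1 + (q+1)*y := hzpos y (by linarith [hy.1]) hy.2.le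
          have hb : (1+y) ^ (-q-1) ≤ (1 + (q+1)*y)⁻¹ := by
            rw [show -q-1 = -(q+1) by ring]
            exact bern_le (by linarith) (by linarith) hz
          have h2 : -q*(1+y)^(-q-1) ≥ -q * (1 + (q+1)*y)⁻¹ := by
            apply neg_le_neg at hb
            nlinarith [hb]
          have h3 : 0 ≤ q - q * (1 + (q+1)*y)⁻¹ - 2*C*y := by
            have hzne : (1 + (q+1)*y) ≠ 0 := hz.ne'
            have expand : q - q * (1 + (q+1)*y)⁻¹ - 2*C*y
                = (y * (q*(q+1) - 2*C - 2*C*(q+1)*y)) / (1 + (q+1)*y) := by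
              field_simp
              ring
            rw [expand]
            apply div_nonneg _ hz.le
            have hbr : 0 ≤ q*(q+1) - 2*C - 2*C*(q+1)*y := by
              have hCδ : 2*C*(q+1)*y ≤ 2*C*(q+1)*δ := by
                apply mul_le_mul_of_nonneg_left hy.2.le
                positivity
              have heq : 2*C*(q+1)*δ = q*(2*q+1)/(4*(q+1)) := by
                rw [hCdef, hδdef]; field_simp
              have hle : q*(2*q+1)/(4*(q+1)) ≤ q/2 := by
                rw [div_le_div_iff₀ (by positivity) (by norm_num)]
                nlinarith
              have hCq : q*(q+1) - 2*C = q/2 := by rw [hCdef]; ring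
              linarith
            exact mul_nonneg hy.1.le hbr
          have h2' : -q * (1 + (q+1)*y)⁻¹ ≤ -q*(1+y)^(-q-1) := h2
          linarith [h2', h3]
      have := mono (Set.mem_Icc.mpr ⟨le_refl 0, hδpos.le⟩) (Set.mem_Icc.mpr ⟨h0w, hwu⟩) h0w
      linarith [hg0, this]
    · -- antitone on [-δ, 0]
      have anti : AntitoneOn g (Set.Icc (-δ) 0) := by
        apply antitoneOn_of_deriv_nonpos (convex_Icc (-δ) 0)
        · intro y hy
          exact ((hderiv y hy.1).differentiableAt.continuousAt).continuousWithinAt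
        · intro y hy
          rw [interior_Icc] at hy
          exact ((hderiv y hy.1.le).differentiableAt).differentiableWithinAt
        · intro y hy
          rw [interior_Icc] at hy
          rw [(hderiv y hy.1.le).deriv]
          have h1 : 0 < 1 + y := hpos y hy.1.le
          have hb : 1 - (q+1)*y ≤ (1+y) ^ (-q-1) := by
            rw [show -q-1 = -(q+1) by ring]
            exact bern_ge (by linarith) (by linarith) hy.2.le
          have h2 : -q*(1+y)^(-q-1) ≤ -q * (1 - (q+1)*y) := by nlinarith [hb]
          have hCq : q*(q+1) - 2*C = q/2 := by rw [hCdef]; ring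
          nlinarith [hy.2.le, hy.1.le]
      have := anti (Set.mem_Icc.mpr ⟨hwl, h0w.le⟩) (Set.mem_Icc.mpr ⟨neg_nonpos_of_nonneg hδpos.le, le_refl 0⟩) h0w.le
      linarith [hg0, this]
  simpa [hgdef] using key

-- part (i) core: γ+2 ≤ 2 t^(-γ) + γ t²
lemma lemC {γ t : ℝ} (hγ : 1 ≤ γ) (ht : 0 < t) :
    γ + 2 ≤ 2 * t ^ (-γ) + γ * t^2 := by
  have hγ2 : (0:ℝ) < γ + 2 := by linarith
  have amgm := Real.geom_mean_le_arith_mean2_weighted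
    (w₁ := 2/(γ+2)) (w₂ := γ/(γ+2)) (p₁ := 1) (p₂ := t^(γ+2))
    (by positivity) (by positivity) (by norm_num) (Real.rpow_pos_of_pos ht _).le
    (by field_simp; ring)
  have e1 : (t^(γ+2)) ^ (γ/(γ+2)) = t ^ γ := by
    rw [← Real.rpow_mul ht.le]
    congr 1
    field_simp
  rw [Real.one_rpow, one_mul, mul_one, e1] at amgm
  -- amgm now in clean form
  -- amgm : t^γ ≤ 2/(γ+2) + γ/(γ+2) * t^(γ+2)
  have htγ : 0 < t ^ γ := Real.rpow_pos_of_pos ht _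
  have e2 : t ^ (-γ) * t ^ (γ+2) = t^2 := by
    rw [← Real.rpow_add ht, ← Real.rpow_natCast t 2]
    norm_num
  have e3 : t ^ (-γ) * t ^ γ = 1 := by
    rw [← Real.rpow_add ht]; norm_num
  have hmul := mul_le_mul_of_nonneg_left amgm (by positivity : (0:ℝ) ≤ (γ+2) * t^(-γ))
  have lhs : (γ+2) * t^(-γ) * (t^γ) = γ + 2 := by
    rw [mul_assoc, mul_comm (t^(-γ)) (t^γ), ← mul_assoc]
    rw [mul_assoc, mul_comm (t^γ) (t^(-γ)), e3, mul_one]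
  have rhs : (γ+2) * t^(-γ) * (2/(γ+2) + γ/(γ+2) * t^(γ+2)) = 2 * t^(-γ) + γ * t^2 := by
    rw [mul_add]
    have : (γ+2) * t^(-γ) * (γ/(γ+2) * t^(γ+2)) = γ * (t^(-γ) * t^(γ+2)) := by
      field_simp
    rw [this, e2]
    field_simp
  rw [lhs, rhs] at hmul
  exact hmul

-- part (ii) scalar core
set_option maxHeartbeats 1000000 in
lemma keyB {γ a b : ℝ} (hγ : 1 ≤ γ) (hab : |a| ≤ b) (hb : b ≤ 1/(2*(γ+2)^2)) :
    (γ+1)*γ/2 * a^2 ≤ (1 + (2*a + b^2)) ^ (-(γ/2)) - 1 + γ*a + γ*b^2 := by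
  set q : ℝ := γ/2 with hqdef
  set w : ℝ := 2*a + b^2 with hwdef
  have hq : 1/2 ≤ q := by rw [hqdef]; linarith
  have hb0 : 0 ≤ b := (abs_nonneg a).trans hab
  have hbsmall : b ≤ 1/18 := by
    have : (1:ℝ)/(2*(γ+2)^2) ≤ 1/18 := by
      rw [div_le_div_iff₀ (by positivity) (by norm_num)]; nlinarith
    linarith
  have hwb : |w| ≤ 3*b := by
    rw [abs_le]
    constructor
    · have := neg_le_of_abs_le hab
      nlinarith
    · have := le_of_abs_le hab
      nlinarith
  have hδeq : 1/(2*(q+1)^2) = 2/(γ+2)^2 := by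
    rw [hqdef]; field_simp
  have hwδ : |w| ≤ 1/(2*(q+1)^2) := by
    rw [hδeq]
    have h1 : 3*b ≤ 3*(1/(2*(γ+2)^2)) := by linarith
    have h2 : (3:ℝ)*(1/(2*(γ+2)^2)) ≤ 2/(γ+2)^2 := by
      rw [mul_one_div, div_le_div_iff₀ (by positivity) (by positivity)]; nlinarith
    linarith
  have hA := lemA hq hwδ
  -- now algebra
  have expand : 1 - q*w + q*(2*q+1)/4 * w^2 - 1 + γ*a + γ*b^2
      = ((γ/2)*b^2 + (γ*(γ+1)/8) * (4*a*b^2 + b^4)) + (γ+1)*γ/2 * a^2 := by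
    rw [hqdef, hwdef]; ring
  have habs : -b ≤ a := neg_le_of_abs_le hab
  have habs' : a ≤ b := le_of_abs_le hab
  have hγb : (γ+1)*b ≤ 1 := by
    have hD : (γ+1) * (1/(2*(γ+2)^2)) ≤ 1 := by
      rw [mul_one_div, div_le_one (by positivity)]; nlinarith
    nlinarith [mul_le_mul_of_nonneg_left hb (by linarith : (0:ℝ) ≤ γ+1)]
  have hγpos : (0:ℝ) ≤ γ*(γ+1)/2 := by nlinarith
  have cross : 0 ≤ (γ/2)*b^2 + (γ*(γ+1)/8) * (4*a*b^2 + b^4) := by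
    have key : 0 ≤ γ/2 * b^2 * (1 - (γ+1)*b) := by
      apply mul_nonneg (by positivity)
      linarith
    have h1' : 0 ≤ γ*(γ+1)/2 * ((a+b)*b^2) :=
      mul_nonneg hγpos (mul_nonneg (by linarith) (sq_nonneg b))
    have h2' : 0 ≤ γ*(γ+1)/8 * b^4 := by
      apply mul_nonneg (by nlinarith) (by positivity)
    linarith [key, h1', h2']
  linarith [hA, cross, expand.le, expand.ge]

lemma rpow_shift {u γ : ℝ} (hu : 0 < u) : u^(-γ-2) * u^2 = u^(-γ) := by
  rw [← Real.rpow_natCast u 2, ← Real.rpow_add hu]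
  norm_num

lemma sq_rpow_half {v γ : ℝ} (hv : 0 < v) : ((v^2 : ℝ)) ^ (-(γ/2)) = v ^ (-γ) := by
  rw [← Real.rpow_natCast v 2, ← Real.rpow_mul hv.le]
  norm_num
  ring_nf

/-- **Barrier estimates for the power function** `φ(x) = |x|^{−γ}`, `γ ≥ 1`.
(i) For every `σ > 0`, with `d = γ σ^{−γ−2}`, the paraboloid
`P(x) = σ^{−γ} + (d/2)σ² − (d/2)|x|²` satisfies `φ ≥ P` away from the origin,
with equality on `|x| = σ`.
(ii) There is `c̄ ∈ (0,1)` such that for `x₀ ≠ 0`, `σ = |x₀|`, `ξ = x₀/σ`,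
`Q(x) = σ^{−γ} + (d/4)σ² − d|x − x₀/2|²`, one has
`φ(x) − Q(x) ≥ ((γ+1)d/2)((x−x₀)·ξ)²` on `B_{c̄σ}(x₀)`. -/
theorem barrier_estimates (n : ℕ) (γ : ℝ) (hγ : 1 ≤ γ) :
    (∀ σ : ℝ, 0 < σ →
      (∀ x : En n, x ≠ 0 →
        σ ^ (-γ) + γ * σ ^ (-γ - 2) / 2 * σ ^ 2 - γ * σ ^ (-γ - 2) / 2 * ‖x‖ ^ 2
          ≤ ‖x‖ ^ (-γ)) ∧
      (∀ x : En n, ‖x‖ = σ →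
        ‖x‖ ^ (-γ)
          = σ ^ (-γ) + γ * σ ^ (-γ - 2) / 2 * σ ^ 2 - γ * σ ^ (-γ - 2) / 2 * ‖x‖ ^ 2)) ∧
    (∃ cbar : ℝ, 0 < cbar ∧ cbar < 1 ∧
      ∀ x₀ : En n, x₀ ≠ 0 →
        ∀ x ∈ ball x₀ (cbar * ‖x₀‖),
          (γ + 1) * (γ * ‖x₀‖ ^ (-γ - 2)) / 2 *
              ((inner ℝ (x - x₀) (‖x₀‖⁻¹ • x₀) : ℝ)) ^ 2
            ≤ ‖x‖ ^ (-γ) -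
              (‖x₀‖ ^ (-γ) + γ * ‖x₀‖ ^ (-γ - 2) / 4 * ‖x₀‖ ^ 2
                - γ * ‖x₀‖ ^ (-γ - 2) * ‖x - (1 / 2 : ℝ) • x₀‖ ^ 2)) := by
  have hγ2 : (0:ℝ) < γ + 2 := by linarith
  constructor
  · intro σ hσ
    constructor
    · intro x hx
      have hlemC : γ + 2 ≤ 2 * (‖x‖/σ) ^ (-γ) + γ * (‖x‖/σ)^2 := by
        have hr : 0 < ‖x‖ := norm_pos_iff.mpr hx
        exact lemC hγ (by positivity)

      have hr : 0 < ‖x‖ := norm_pos_iff.mpr hx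
      set t : ℝ := ‖x‖/σ with htdef
      have ht : 0 < t := by positivity
      have hrt : ‖x‖ = σ * t := by rw [htdef]; field_simp
      have h3 : σ^(-γ-2) * σ^2 = σ^(-γ) := rpow_shift hσ
      have h1 : ‖x‖^(-γ) = σ^(-γ) * t^(-γ) := by rw [hrt, Real.mul_rpow hσ.le ht.le]
      have h2 : (‖x‖ : ℝ)^2 = σ^2 * t^2 := by rw [hrt]; ring
      have hA : (0:ℝ) < σ^(-γ) := Real.rpow_pos_of_pos hσ _
      have step := mul_le_mul_of_nonneg_left hlemC (by positivity : (0:ℝ) ≤ σ^(-γ)/2)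
      have e1 : γ * σ^(-γ-2) / 2 * σ^2 = γ/2 * σ^(-γ) := by rw [← h3]; ring
      have e2 : γ * σ^(-γ-2) / 2 * ‖x‖^2 = γ/2 * (σ^(-γ) * t^2) := by rw [h2, ← h3]; ring
      linarith [step, h1, e1, e2]
    · intro x hx
      rw [hx]
      ring
  · refine ⟨1/(2*(γ+2)^2), by positivity, ?_, ?_⟩
    · rw [div_lt_one (by positivity)]
      nlinarith
    · intro x₀ hx₀ x hx
      have KB : ∀ a b : ℝ, |a| ≤ b → b ≤ 1/(2*(γ+2)^2) →
          (γ+1)*γ/2 * a^2 ≤ (1 + (2*a + b^2)) ^ (-(γ/2)) - 1 + γ*a + γ*b^2 :=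
        fun a b hab hb => keyB hγ hab hb

      have hγ2 : (0:ℝ) < γ + 2 := by linarith
      set cbar : ℝ := 1/(2*(γ+2)^2) with hcb
      set σ : ℝ := ‖x₀‖ with hσdef
      have hσ : 0 < σ := norm_pos_iff.mpr hx₀
      set ρ : ℝ := ‖x - x₀‖ with hρdef
      have hρ0 : 0 ≤ ρ := norm_nonneg _
      have hdist : ρ < cbar * σ := by
        rw [mem_ball, dist_eq_norm] at hx
        exact hx
      set S : ℝ := (inner ℝ (x - x₀) x₀ : ℝ) with hSdef
      have hs_inner : (inner ℝ (x - x₀) (σ⁻¹ • x₀) : ℝ) = σ⁻¹ * S := by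
        rw [real_inner_smul_right]
      set a : ℝ := σ⁻¹ * S / σ with hadef
      set b : ℝ := ρ / σ with hbdef
      have hb0 : 0 ≤ b := by positivity
      have hSa : S = σ^2 * a := by rw [hadef]; field_simp
      -- Cauchy-Schwarz
      have hCS : |σ⁻¹ * S| ≤ ρ := by
        rw [← hs_inner]
        calc |(inner ℝ (x - x₀) (σ⁻¹ • x₀) : ℝ)| ≤ ‖x - x₀‖ * ‖σ⁻¹ • x₀‖ :=
              abs_real_inner_le_norm _ _
        _ = ρ := by
            rw [norm_smul, Real.norm_eq_abs, abs_inv, abs_of_pos hσ, ← hσdef, ← hρdef]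
            field_simp
      have hab : |a| ≤ b := by
        rw [hadef, hbdef, abs_div, abs_of_pos hσ]
        gcongr
      -- b small
      have hb : b ≤ cbar := by
        rw [hbdef]
        rw [div_le_iff₀ hσ]
        linarith
      -- norm of x positive
      have hxn : 0 < ‖x‖ := by
        have htri : ‖x₀‖ ≤ ‖x‖ + ‖x - x₀‖ := by
          calc ‖x₀‖ = ‖x - (x - x₀)‖ := by rw [sub_sub_cancel]
          _ ≤ ‖x‖ + ‖x - x₀‖ := norm_sub_le _ _
        have hcb1 : cbar * σ ≤ σ := by
          have h1 : cbar ≤ 1 := by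
            rw [hcb, div_le_one (by positivity)]
            nlinarith
          nlinarith [mul_le_mul_of_nonneg_right h1 hσ.le]
        rw [← hσdef, ← hρdef] at htri
        linarith
      -- expansion of ‖x‖²
      have hF2 : (‖x‖:ℝ)^2 = σ^2 * (1 + (2*a + b^2)) := by
        have hd : x = x₀ + (x - x₀) := by abel
        have := norm_add_sq_real x₀ (x - x₀)
        rw [← hd] at this
        rw [this, real_inner_comm, ← hSdef, ← hσdef, ← hρdef, hSa, hbdef]
        field_simp
        ring
      have hu : 0 < 1 + (2*a + b^2) := by
        have h := hF2
        nlinarith [sq_nonneg (‖x‖:ℝ), hxn, hσ, mul_pos hxn hxn]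
      -- expansion of ‖x - ½x₀‖²
      have hF3 : ‖x - (1/2 : ℝ) • x₀‖^2 = σ^2*b^2 + σ^2*a + σ^2/4 := by
        have hd : x - (1/2 : ℝ) • x₀ = (x - x₀) + (1/2 : ℝ) • x₀ := by
          module
        rw [hd, norm_add_sq_real, real_inner_smul_right, ← hSdef, norm_smul,
          Real.norm_eq_abs, ← hρdef, ← hσdef, hSa, hbdef]
        rw [mul_pow, abs_of_pos (by norm_num : (0:ℝ) < 1/2)]
        field_simp
        ring
      -- rpow of ‖x‖
      have hx_rpow : ‖x‖ ^ (-γ) = σ^(-γ) * (1 + (2*a + b^2)) ^ (-(γ/2)) := by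
        rw [← sq_rpow_half hxn, hF2, Real.mul_rpow (by positivity) hu.le, sq_rpow_half hσ]
      -- the inner product in the goal
      have hs2 : (inner ℝ (x - x₀) (σ⁻¹ • x₀) : ℝ) = σ * a := by
        rw [hs_inner, hadef]
        field_simp
      have h3 : σ^(-γ-2) * σ^2 = σ^(-γ) := rpow_shift hσ
      have hKB := KB a b hab (le_trans hb (le_of_eq hcb))
      have hAnn : (0:ℝ) ≤ σ^(-γ) := (Real.rpow_pos_of_pos hσ _).le
      have final := mul_le_mul_of_nonneg_left hKB hAnn
      rw [hs2, hx_rpow, hF3]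
      have eL : (γ + 1) * (γ * σ^(-γ-2)) / 2 * (σ*a)^2 = σ^(-γ) * ((γ+1)*γ/2*a^2) := by
        rw [← h3]; ring
      have eR : σ^(-γ) * (1 + (2*a + b^2)) ^ (-(γ/2)) -
          (σ^(-γ) + γ * σ^(-γ-2) / 4 * σ^2 - γ * σ^(-γ-2) * (σ^2*b^2 + σ^2*a + σ^2/4))
          = σ^(-γ) * ((1 + (2*a + b^2)) ^ (-(γ/2)) - 1 + γ*a + γ*b^2) := by
        rw [← h3]; ring
      linarith [final, eL, eR]
end
end

section
/- Discrete supersolutions cannot be touched from below by the comparison polynomials. Fix 0 < λ_min ≤ λ_max and let Λ > 0 satisfy (Λ/n − 1)λ_min > (n−1)λ_max. Let ε > 0, let λ_i : εℤⁿ → ℝ satisfy λ_min ≤ λ_i(x) ≤ λ_max, let u : B₁ ∩ εℤⁿ → ℝ, and let x₀ ∈ B₁ ∩ εℤⁿ be a lattice point with x₀ ± εe_i ∈ B₁ for all i and Lu(x₀) ≤ 0. Then for every a > 0, every unit vector ξ ∈ ℝⁿ and every b ∈ ℝⁿ, the polynomial P(x) = a[(Λ/2)((x−x₀)·ξ)²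 − (1/2)|x−x₀|² + b·(x−x₀)] + u(x₀) cannot satisfy P(x) ≤ u(x) at all 2n points x = x₀ ± εe_i, i = 1,…,n. (Equivalently, no such P touches u from below at x₀ on the lattice neighborhood {x₀ ± εe_i}.) -/
open Metric

noncomputable section

/-- `x` belongs to the lattice `εℤⁿ`. -/
def IsLatticePoint {n : ℕ} (ε : ℝ) (x : En n) : Prop := ∀ i, ∃ m : ℤ, x i = ε * m

/-- The discrete elliptic operator
`Lu(x) = Σᵢ λᵢ(x)[u(x+εeᵢ)+u(x−εeᵢ)−2u(x)]/ε²`. -/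
def discreteL {n : ℕ} (ε : ℝ) (lam : Fin n → En n → ℝ) (u : En n → ℝ) (x : En n) : ℝ :=
  ∑ i, lam i x *
    (u (x + EuclideanSpace.single i ε) + u (x - EuclideanSpace.single i ε) - 2 * u x) / ε ^ 2

/-- The comparison polynomial
`P(x) = a[(Λ/2)((x−x₀)·ξ)² − (1/2)|x−x₀|² + b·(x−x₀)] + v`. -/
def touchPoly {n : ℕ} (Λ a : ℝ) (ξ b x₀ : En n) (v : ℝ) (x : En n) : ℝ :=
  a * (Λ / 2 * ((inner ℝ (x - x₀) ξ : ℝ)) ^ 2 - 1 / 2 * ‖x - x₀‖ ^ 2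
      + (inner ℝ b (x - x₀) : ℝ)) + v

set_option maxHeartbeats 1000000 in
/-- **Discrete supersolutions cannot be touched from below by the comparison polynomials.** -/
theorem discrete_no_touching (n : ℕ) (hn : 1 ≤ n) (lmin lmax Λ : ℝ)
    (hmin : 0 < lmin) (hminmax : lmin ≤ lmax)
    (hΛ : ((n : ℝ) - 1) * lmax < (Λ / n - 1) * lmin) :
    ∀ ε : ℝ, 0 < ε →
    ∀ lam : Fin n → En n → ℝ, (∀ i x, lmin ≤ lam i x ∧ lam i x ≤ lmax) →
    ∀ (u : En n → ℝ) (x₀ : En n),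
      IsLatticePoint ε x₀ → x₀ ∈ ball (0 : En n) 1 →
      (∀ i, x₀ + EuclideanSpace.single i ε ∈ ball (0 : En n) 1 ∧
            x₀ - EuclideanSpace.single i ε ∈ ball (0 : En n) 1) →
      discreteL ε lam u x₀ ≤ 0 →
      ∀ a : ℝ, 0 < a → ∀ ξ b : En n, ‖ξ‖ = 1 →
        ¬ (∀ i,
            touchPoly Λ a ξ b x₀ (u x₀) (x₀ + EuclideanSpace.single i ε)
              ≤ u (x₀ + EuclideanSpace.single i ε) ∧
            touchPoly Λ a ξ b x₀ (u x₀) (x₀ - EuclideanSpace.single i ε)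
              ≤ u (x₀ - EuclideanSpace.single i ε)) := by
  intro ε hε lam hlam u x₀ _ _ _ hL a ha ξ b hξ h
  have hn' : (0:ℝ) < n := by exact_mod_cast Nat.lt_of_lt_of_le Nat.zero_lt_one hn
  -- positivity of Λ/n - 1
  have hΛn : 0 < Λ / n - 1 := by
    have h1 : (0:ℝ) ≤ ((n:ℝ) - 1) * lmax := by
      have : (1:ℝ) ≤ n := by exact_mod_cast hn
      nlinarith
    nlinarith
  have hΛpos : 0 < Λ := by
    have h1 : (0:ℝ) < Λ / n := by linarith
    have h2 := mul_pos h1 hn'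
    rwa [div_mul_cancel₀ _ (ne_of_gt hn')] at h2
  -- key per-direction estimate
  have key : ∀ i : Fin n,
      a * (ε ^ 2 * (Λ * (ξ i) ^ 2 - 1)) ≤
        u (x₀ + EuclideanSpace.single i ε) + u (x₀ - EuclideanSpace.single i ε) - 2 * u x₀ := by
    intro i
    obtain ⟨h1, h2⟩ := h i
    have e1 : (x₀ + EuclideanSpace.single i ε) - x₀ = EuclideanSpace.single i ε := by
      abel
    have e2 : (x₀ - EuclideanSpace.single i ε) - x₀ = -EuclideanSpace.single i ε := by
      abel
    have i1 : (inner ℝ (EuclideanSpace.single i ε : En n) ξ : ℝ) = ε * ξ i := by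
      rw [EuclideanSpace.inner_single_left]; simp
    have i2 : (inner ℝ b (EuclideanSpace.single i ε : En n) : ℝ) = ε * b i := by
      rw [EuclideanSpace.inner_single_right]; simp
    have nrm : ‖(EuclideanSpace.single i ε : En n)‖ = ε := by
      rw [EuclideanSpace.norm_single]; exact abs_of_pos hε
    rw [touchPoly, e1, i1, i2, nrm] at h1
    rw [touchPoly, e2] at h2
    rw [inner_neg_left, inner_neg_right, i1, i2, norm_neg, nrm] at h2
    nlinarith [h1, h2]
  -- lower bound on discreteL
  have step : ∀ i : Fin n,
      lam i x₀ * (a * (Λ * (ξ i) ^ 2 - 1)) ≤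
        lam i x₀ *
          (u (x₀ + EuclideanSpace.single i ε) + u (x₀ - EuclideanSpace.single i ε) - 2 * u x₀)
          / ε ^ 2 := by
    intro i
    have hl := (hlam i x₀).1
    have hl0 : 0 ≤ lam i x₀ := le_trans hmin.le hl
    have hk := key i
    rw [div_eq_mul_inv, mul_assoc]
    apply mul_le_mul_of_nonneg_left _ hl0
    rw [← div_eq_mul_inv, le_div_iff₀ (by positivity)]
    nlinarith [key i]
  have hsum : ∑ i, lam i x₀ * (a * (Λ * (ξ i) ^ 2 - 1)) ≤ discreteL ε lam u x₀ :=
    Finset.sum_le_sum (fun i _ => step i)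
  -- find a coordinate with ξ i ^ 2 ≥ 1/n
  have hsumsq : ∑ i, (ξ i) ^ 2 = 1 := by
    have h1 := EuclideanSpace.norm_eq ξ
    rw [hξ] at h1
    have h3 : ∑ i, ‖ξ i‖ ^ 2 = ∑ i, (ξ i) ^ 2 := by simp [Real.norm_eq_abs, sq_abs]
    rw [h3] at h1
    nlinarith [Real.sq_sqrt (by positivity : (0:ℝ) ≤ ∑ i, (ξ i) ^ 2)]
  have hne : (Finset.univ : Finset (Fin n)).Nonempty := by
    rw [Finset.univ_nonempty_iff]
    exact Fin.pos_iff_nonempty.mp (Nat.lt_of_lt_of_le Nat.zero_lt_one hn)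
  obtain ⟨i₀, hi₀⟩ : ∃ i₀ : Fin n, 1 / (n:ℝ) ≤ (ξ i₀) ^ 2 := by
    by_contra hcon
    push_neg at hcon
    have : ∑ i, (ξ i) ^ 2 < ∑ _i : Fin n, 1 / (n:ℝ) :=
      Finset.sum_lt_sum_of_nonempty hne (fun i _ => hcon i)
    rw [hsumsq, Finset.sum_const, Finset.card_univ, Fintype.card_fin] at this
    rw [nsmul_eq_mul, mul_one_div, div_self (ne_of_gt hn')] at this
    exact lt_irrefl 1 this
  -- lower bound the sum
  have hmain : 0 < ∑ i, lam i x₀ * (a * (Λ * (ξ i) ^ 2 - 1)) := by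
    rw [← Finset.add_sum_erase _ _ (Finset.mem_univ i₀)]
    have t1 : lmin * (a * (Λ / n - 1)) ≤ lam i₀ x₀ * (a * (Λ * (ξ i₀) ^ 2 - 1)) := by
      have hl := (hlam i₀ x₀).1
      have hbr : Λ / n - 1 ≤ Λ * (ξ i₀) ^ 2 - 1 := by
        have : Λ / n ≤ Λ * (ξ i₀) ^ 2 := by
          rw [div_eq_mul_inv, ← one_div]
          exact mul_le_mul_of_nonneg_left hi₀ hΛpos.le
        linarith
      have h1 : lmin * (a * (Λ / n - 1)) ≤ lam i₀ x₀ * (a * (Λ / n - 1)) := by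
        apply mul_le_mul_of_nonneg_right hl (by positivity)
      have h2 : lam i₀ x₀ * (a * (Λ / n - 1)) ≤ lam i₀ x₀ * (a * (Λ * (ξ i₀) ^ 2 - 1)) := by
        apply mul_le_mul_of_nonneg_left _ (le_trans hmin.le hl)
        exact mul_le_mul_of_nonneg_left hbr ha.le
      linarith
    have t2 : -(((n:ℝ) - 1) * (lmax * a)) ≤
        ∑ i ∈ Finset.univ.erase i₀, lam i x₀ * (a * (Λ * (ξ i) ^ 2 - 1)) := by
      have hcard : ((Finset.univ.erase i₀).card : ℝ) = (n:ℝ) - 1 := by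
        rw [Finset.card_erase_of_mem (Finset.mem_univ i₀), Finset.card_univ, Fintype.card_fin]
        have : 1 ≤ n := hn
        push_cast [Nat.cast_sub this]
        ring
      calc -(((n:ℝ) - 1) * (lmax * a))
          = ∑ _i ∈ Finset.univ.erase i₀, -(lmax * a) := by
            rw [Finset.sum_const, nsmul_eq_mul, hcard]; ring
        _ ≤ ∑ i ∈ Finset.univ.erase i₀, lam i x₀ * (a * (Λ * (ξ i) ^ 2 - 1)) := by
            apply Finset.sum_le_sum
            intro i _
            have hl1 := (hlam i x₀).1
            have hl2 := (hlam i x₀).2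
            nlinarith [sq_nonneg (ξ i),
              mul_nonneg (mul_nonneg (mul_nonneg (le_trans hmin.le hl1) ha.le) hΛpos.le)
                (sq_nonneg (ξ i)),
              mul_nonneg (sub_nonneg.mpr hl2) ha.le]
    have hfin : 0 < lmin * (a * (Λ / n - 1)) - ((n:ℝ) - 1) * (lmax * a) := by
      have h9 : 0 < ((Λ / (n:ℝ) - 1) * lmin - ((n:ℝ) - 1) * lmax) * a :=
        mul_pos (by linarith) ha
      nlinarith [h9]
    linarith
  linarith [lt_of_lt_of_le hmain hsum]
end
end
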